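/- arXiv:1703.03509 — 2 statements merged into one kernel-verified Lean document; each statement's English description precedes it below -/
import Mathlib

section
/- Let U and V be independent exponential random variables with means σ_r² and σ_{r,2}² respectively, and let λ, θ_r > 0. Then P( λV(1 - θ_r/U) ≤ θ_r ) = 1 - exp(-θ_r/σ_r² - θ_r/(λσ_{r,2}²)) · μ·K1(μ), where μ = 2θ_r/√(λσ_r²σ_{r,2}²) and K1 is the modified Bessel function of the second kind of order 1. -/
open MeasureTheory ProbabilityTheory Real Set

/-- The modified Bessel function of the second kind of order 1,
via the integral representation `K₁(x) = ∫₀^∞ exp(-x cosh t) cosh t dt`. -/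
noncomputable def besselK1 (x : ℝ) : ℝ :=
  ∫ t in Set.Ioi (0 : ℝ), Real.exp (-x * Real.cosh t) * Real.cosh t


-- 1D lintegral change of variables
lemma my_lintegral_image {s : Set ℝ} {f f' : ℝ → ℝ}
    (hs : MeasurableSet s) (hf' : ∀ x ∈ s, HasDerivWithinAt f (f' x) s x)
    (hf : InjOn f s) (g : ℝ → ENNReal) :
    ∫⁻ x in f '' s, g x = ∫⁻ x in s, ENNReal.ofReal |f' x| * g (f x) := by
  simpa only [ContinuousLinearMap.det_toSpanSingleton] using
    MeasureTheory.lintegral_image_eq_lintegral_abs_det_fderiv_mul volume hs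
      (fun x hx => (hf' x hx).hasFDerivWithinAt) hf g

-- integrability of the Bessel integrand
set_option maxHeartbeats 2000000 in
lemma besselK1_integrable {m : ℝ} (hm : 0 < m) :
    IntegrableOn (fun t => Real.exp (-(m * Real.cosh t)) * Real.cosh t) (Ioi (0:ℝ)) := by
  have hbound : IntegrableOn (fun t => Real.exp t * Real.exp (-(m/2 * Real.exp t))) (Ioi (0:ℝ)) := by
    have hderiv : ∀ x ∈ Ici (0:ℝ),
        HasDerivAt (fun t => -(2/m) * Real.exp (-(m/2 * Real.exp t)))
          (Real.exp x * Real.exp (-(m/2 * Real.exp x))) x := by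
      intro x _
      have h1 : HasDerivAt (fun t : ℝ => -(m/2 * Real.exp t)) (-(m/2 * Real.exp x)) x :=
        ((Real.hasDerivAt_exp x).const_mul (m/2)).neg
      have h2 := (h1.exp).const_mul (-(2/m))
      convert h2 using 1
      · rfl
      · rfl
      have h2m : 2/m * (m/2) = 1 := by field_simp
      linear_combination (-(Real.exp x * Real.exp (-(m/2*Real.exp x)))) * h2m
    have htend : Filter.Tendsto (fun t => -(2/m) * Real.exp (-(m/2 * Real.exp t)))
        Filter.atTop (nhds 0) := by
      have : Filter.Tendsto (fun t : ℝ => -(m/2 * Real.exp t)) Filter.atTop Filter.atBot := by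
        apply Filter.tendsto_neg_atBot_iff.mpr
        exact Filter.Tendsto.const_mul_atTop (by positivity) Real.tendsto_exp_atTop
      have := (Real.tendsto_exp_atBot.comp this).const_mul (-(2/m))
      simpa using this
    exact integrableOn_Ioi_deriv_of_nonneg' hderiv (fun x _ => by positivity) htend
  refine Integrable.mono hbound ?_ ?_
  · exact (((continuous_const.mul Real.continuous_cosh).neg.rexp).mul Real.continuous_cosh).aestronglyMeasurable
  · filter_upwards [ae_restrict_mem measurableSet_Ioi] with t ht
    have ht0 : (0:ℝ) ≤ t := le_of_lt ht
    have hc1 : Real.cosh t ≤ Real.exp t := by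
      rw [Real.cosh_eq]
      have : Real.exp (-t) ≤ Real.exp t := Real.exp_le_exp.mpr (by linarith)
      linarith
    have hc2 : Real.exp t / 2 ≤ Real.cosh t := by
      rw [Real.cosh_eq]
      have : (0:ℝ) < Real.exp (-t) := Real.exp_pos _
      linarith
    rw [Real.norm_eq_abs, Real.norm_eq_abs, abs_of_nonneg (by positivity),
      abs_of_nonneg (by positivity)]
    have h3 : Real.exp (-(m * Real.cosh t)) ≤ Real.exp (-(m/2 * Real.exp t)) := by
      apply Real.exp_le_exp.mpr
      nlinarith [Real.exp_pos t]
    calc Real.exp (-(m * Real.cosh t)) * Real.cosh t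
        ≤ Real.exp (-(m/2 * Real.exp t)) * Real.exp t := by
          apply mul_le_mul h3 hc1 (by positivity) (by positivity)
      _ = Real.exp t * Real.exp (-(m/2 * Real.exp t)) := by ring

lemma besselK1_lintegral {m : ℝ} (hm : 0 < m) :
    ∫⁻ t in Ioi (0:ℝ), ENNReal.ofReal (Real.exp (-(m * Real.cosh t)) * Real.cosh t)
      = ENNReal.ofReal (besselK1 m) := by
  rw [besselK1]
  rw [← ofReal_integral_eq_lintegral_ofReal (besselK1_integrable hm)]
  · congr 1
    apply setIntegral_congr_fun measurableSet_Ioi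
    intro t _
    simp only [neg_mul]
  · filter_upwards with t
    positivity

lemma sqrt_aux {a b : ℝ} (ha : 0 < a) (hb : 0 < b) :
    Real.sqrt (a/b) * Real.sqrt (a*b) = a ∧ b * Real.sqrt (a/b) = Real.sqrt (a*b) := by
  constructor
  · rw [← Real.sqrt_mul (by positivity)]
    rw [show a/b*(a*b) = a^2 by field_simp]
    exact Real.sqrt_sq ha.le
  · rw [show b * Real.sqrt (a/b) = Real.sqrt b ^ 2 * Real.sqrt (a/b) by
      rw [Real.sq_sqrt hb.le]]
    rw [show Real.sqrt b ^2 * Real.sqrt (a/b) = Real.sqrt b * (Real.sqrt b * Real.sqrt (a/b)) by ring,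
      ← Real.sqrt_mul hb.le, show b * (a/b) = a by field_simp, ← Real.sqrt_mul hb.le, mul_comm b a]

set_option maxHeartbeats 2000000 in
lemma key_integral {a b : ℝ} (ha : 0 < a) (hb : 0 < b) :
    ∫⁻ x in Ioi (0:ℝ), ENNReal.ofReal (Real.exp (-(a/x) - b*x))
      = ENNReal.ofReal (2 * Real.sqrt (a/b) *
          besselK1 (2 * Real.sqrt (a*b))) := by
  set s : ℝ := Real.sqrt (a/b) with hs_def
  set q : ℝ := Real.sqrt (a*b) with hq_def
  have hs : 0 < s := Real.sqrt_pos.mpr (by positivity)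
  have hq : 0 < q := Real.sqrt_pos.mpr (by positivity)
  have hsq1 : s * q = a := (sqrt_aux ha hb).1
  have hsq2 : b * s = q := (sqrt_aux ha hb).2
  have him1 : (fun t : ℝ => s * Real.exp t) '' Ioi 0 = Ioi s := by
    ext y
    simp only [mem_image, mem_Ioi]
    constructor
    · rintro ⟨t, ht, rfl⟩
      have h1 : (1:ℝ) < Real.exp t := by
        rw [show (1:ℝ) = Real.exp 0 from Real.exp_zero.symm]
        exact Real.exp_lt_exp.mpr ht
      nlinarith
    · intro hy
      refine ⟨Real.log (y/s), ?_, ?_⟩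
      · apply Real.log_pos
        rw [lt_div_iff₀ hs]
        linarith
      · rw [Real.exp_log (div_pos (hs.trans hy) hs)]
        field_simp
  have him2 : (fun t : ℝ => s * Real.exp (-t)) '' Ioi 0 = Ioo 0 s := by
    ext y
    simp only [mem_image, mem_Ioi, mem_Ioo]
    constructor
    · rintro ⟨t, ht, rfl⟩
      refine ⟨by positivity, ?_⟩
      have : Real.exp (-t) < 1 := Real.exp_lt_one_iff.mpr (by linarith)
      nlinarith
    · rintro ⟨hy0, hys⟩
      refine ⟨Real.log (s/y), ?_, ?_⟩
      · apply Real.log_pos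
        rw [lt_div_iff₀ hy0]
        linarith
      · rw [← Real.log_inv, Real.exp_log (by positivity)]
        field_simp
  have hderiv1 : ∀ t ∈ Ioi (0:ℝ), HasDerivWithinAt (fun t : ℝ => s * Real.exp t)
      (s * Real.exp t) (Ioi 0) t := fun t _ =>
    ((Real.hasDerivAt_exp t).const_mul s).hasDerivWithinAt
  have hderiv2 : ∀ t ∈ Ioi (0:ℝ), HasDerivWithinAt (fun t : ℝ => s * Real.exp (-t))
      (-(s * Real.exp (-t))) (Ioi 0) t := by
    intro t _
    have h1 : HasDerivAt (fun t : ℝ => Real.exp (-t)) (-Real.exp (-t)) t := by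
      simpa using ((hasDerivAt_id t).neg).exp
    simpa [mul_comm, neg_mul, mul_neg] using (h1.const_mul s).hasDerivWithinAt
  have hinj1 : InjOn (fun t : ℝ => s * Real.exp t) (Ioi 0) := by
    intro x _ y _ h
    simp only at h
    exact Real.exp_injective (mul_left_cancel₀ (ne_of_gt hs) h)
  have hinj2 : InjOn (fun t : ℝ => s * Real.exp (-t)) (Ioi 0) := by
    intro x _ y _ h
    simp only at h
    have := Real.exp_injective (mul_left_cancel₀ (ne_of_gt hs) h)
    linarith [neg_injective this]
  set g : ℝ → ENNReal := fun x => ENNReal.ofReal (Real.exp (-(a/x) - b*x)) with hg_def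
  have hpt : ∀ t : ℝ, -(a / (s * Real.exp t)) - b * (s * Real.exp t)
      = -(2 * q * Real.cosh t) := by
    intro t
    have h1 : a / (s * Real.exp t) = q * Real.exp (-t) := by
      rw [Real.exp_neg, div_eq_iff (by positivity : (0:ℝ) < s * Real.exp t).ne']
      rw [show q * (Real.exp t)⁻¹ * (s * Real.exp t)
          = (s * q) * ((Real.exp t)⁻¹ * Real.exp t) by ring,
        inv_mul_cancel₀ (Real.exp_ne_zero t), mul_one, hsq1]
    have h2 : b * (s * Real.exp t) = q * Real.exp t := by
      rw [show b * (s * Real.exp t) = (b * s) * Real.exp t by ring, hsq2]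
    rw [h1, h2, Real.cosh_eq]
    ring
  have split : Ioi (0:ℝ) = Ioo 0 s ∪ Ici s := (Ioo_union_Ici_eq_Ioi hs).symm
  rw [split]
  rw [lintegral_union measurableSet_Ici
    ((Set.Iio_disjoint_Ici le_rfl).mono_left fun x hx => hx.2)]
  have e1 : ∫⁻ x in Ici s, g x = ∫⁻ x in Ioi s, g x :=
    setLIntegral_congr (Ioi_ae_eq_Ici (μ := (volume : Measure ℝ)) (a := s)).symm
  rw [e1, ← him1, ← him2, my_lintegral_image measurableSet_Ioi hderiv1 hinj1 g,
    my_lintegral_image measurableSet_Ioi hderiv2 hinj2 g]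
  have c1 : ∫⁻ t in Ioi (0:ℝ), ENNReal.ofReal |s * Real.exp t| * g (s * Real.exp t)
      = ∫⁻ t in Ioi (0:ℝ),
          ENNReal.ofReal (s * (Real.exp (-(2 * q * Real.cosh t)) * Real.exp t)) := by
    apply lintegral_congr
    intro t
    simp only [hg_def]
    rw [abs_of_nonneg (by positivity : (0:ℝ) ≤ s * Real.exp t),
      ← ENNReal.ofReal_mul (by positivity)]
    congr 1
    rw [hpt t]
    ring
  have c2 : ∫⁻ t in Ioi (0:ℝ), ENNReal.ofReal |(-(s * Real.exp (-t)))| * g (s * Real.exp (-t))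
      = ∫⁻ t in Ioi (0:ℝ),
          ENNReal.ofReal (s * (Real.exp (-(2 * q * Real.cosh t)) * Real.exp (-t))) := by
    apply lintegral_congr
    intro t
    simp only [hg_def, abs_neg]
    rw [abs_of_nonneg (by positivity : (0:ℝ) ≤ s * Real.exp (-t)),
      ← ENNReal.ofReal_mul (by positivity)]
    congr 1
    have h := hpt (-t)
    rw [Real.cosh_neg] at h
    rw [h]
    ring
  rw [c1, c2, ← lintegral_add_left (by
    exact ((continuous_const.mul ((continuous_const.mul Real.continuous_cosh).neg.rexp.mul
      (Real.continuous_exp.comp continuous_neg))).measurable).ennreal_ofReal)]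
  have c3 : ∀ t ∈ Ioi (0:ℝ),
      ENNReal.ofReal (s * (Real.exp (-(2 * q * Real.cosh t)) * Real.exp (-t)))
        + ENNReal.ofReal (s * (Real.exp (-(2 * q * Real.cosh t)) * Real.exp t))
      = ENNReal.ofReal (2 * s)
          * ENNReal.ofReal (Real.exp (-(2 * q * Real.cosh t)) * Real.cosh t) := by
    intro t _
    rw [← ENNReal.ofReal_add (by positivity) (by positivity),
      ← ENNReal.ofReal_mul (by positivity)]
    congr 1
    rw [Real.cosh_eq]
    ring
  rw [setLIntegral_congr_fun measurableSet_Ioi c3]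
  rw [lintegral_const_mul _ (f := fun t => ENNReal.ofReal (Real.exp (-(2 * q * Real.cosh t)) * Real.cosh t)) (((continuous_const.mul Real.continuous_cosh).neg.rexp.mul
      Real.continuous_cosh).measurable).ennreal_ofReal]
  rw [besselK1_lintegral (by positivity), ← ENNReal.ofReal_mul (by positivity)]

lemma exp_law {Ω : Type*} [MeasurableSpace Ω] (P : Measure Ω) [IsProbabilityMeasure P]
    (U : Ω → ℝ) (hUm : Measurable U) {σ : ℝ} (hσ : 0 < σ)
    (hU : ∀ s : ℝ, 0 ≤ s → P {ω | U ω > s} = ENNReal.ofReal (Real.exp (-s / σ))) :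
    Measure.map U P = (volume : Measure ℝ).withDensity (exponentialPDF (1/σ)) := by
  have key : ∀ x : ℝ, P {ω | U ω ≤ x}
      = ENNReal.ofReal (if 0 ≤ x then 1 - Real.exp (-(1/σ * x)) else 0) := by
    intro x
    by_cases hx : 0 ≤ x
    · rw [if_pos hx]
      have hcompl : {ω | U ω ≤ x} = {ω | U ω > x}ᶜ := by
        ext ω; simp [not_lt]
      rw [hcompl, measure_compl (measurableSet_lt measurable_const hUm : MeasurableSet {ω | U ω > x}) (measure_ne_top _ _),
        measure_univ, hU x hx]
      rw [ENNReal.ofReal_sub _ (Real.exp_pos _).le, ENNReal.ofReal_one]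
      congr 2
      field_simp
    · rw [if_neg hx]
      push_neg at hx
      have h0 : P {ω | U ω > 0} = 1 := by
        rw [hU 0 le_rfl]; simp
      have hsub : {ω | U ω ≤ x} ⊆ {ω | U ω > 0}ᶜ := by
        intro ω hω
        simp only [Set.mem_setOf_eq, Set.mem_compl_iff, not_lt] at hω ⊢
        linarith
      have : P {ω | U ω > 0}ᶜ = 0 := by
        rw [measure_compl (measurableSet_lt measurable_const hUm : MeasurableSet {ω | U ω > 0}) (measure_ne_top _ _), measure_univ, h0]
        simp
      simp only [ENNReal.ofReal_zero]
      exact le_antisymm (le_trans (measure_mono hsub) this.le) (by simp)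
  have : IsFiniteMeasure (Measure.map U P) := by
    constructor
    rw [Measure.map_apply hUm MeasurableSet.univ]
    simp
  apply Measure.ext_of_Iic
  intro x
  rw [Measure.map_apply hUm measurableSet_Iic,
    withDensity_apply _ measurableSet_Iic,
    ProbabilityTheory.lintegral_exponentialPDF_eq_antiDeriv (by positivity) x]
  exact key x

set_option maxHeartbeats 2000000 in
/-- For independent exponential `U`, `V` with means `σr²`, `σr2²` and `λ, θr > 0`,
`P(λV(1 - θr/U) ≤ θr) = 1 - exp(-θr/σr² - θr/(λσr2²))·μ·K₁(μ)` where
`μ = 2θr/√(λσr²σr2²)`. -/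
theorem stmt_3 {Ω : Type*} [MeasurableSpace Ω] (P : Measure Ω) [IsProbabilityMeasure P]
    (U V : Ω → ℝ) (hUm : Measurable U) (hVm : Measurable V)
    (σrsq σr2sq lam θr : ℝ) (hσr : 0 < σrsq) (hσr2 : 0 < σr2sq)
    (hlam : 0 < lam) (hθr : 0 < θr)
    (hU : ∀ s : ℝ, 0 ≤ s → P {ω | U ω > s} = ENNReal.ofReal (Real.exp (-s / σrsq)))
    (hV : ∀ s : ℝ, 0 ≤ s → P {ω | V ω > s} = ENNReal.ofReal (Real.exp (-s / σr2sq)))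
    (hind : IndepFun U V P) :
    P {ω | lam * V ω * (1 - θr / U ω) ≤ θr} =
      ENNReal.ofReal (1 - Real.exp (-θr / σrsq - θr / (lam * σr2sq)) *
        ((2 * θr / Real.sqrt (lam * σrsq * σr2sq)) *
          besselK1 (2 * θr / Real.sqrt (lam * σrsq * σr2sq)))) := by
  set r1 : ℝ := 1/σrsq with hr1_def
  set c : ℝ := θr/(lam*σr2sq) with hc_def
  have hr1 : 0 < r1 := by positivity
  have hc : 0 < c := by positivity
  set μe : ℝ := 2 * θr / Real.sqrt (lam * σrsq * σr2sq) with hμe_def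
  set S : Set (ℝ × ℝ) := {p | θr < lam * p.2 * (1 - θr / p.1)} with hS_def
  have hSm : MeasurableSet S :=
    measurableSet_lt measurable_const
      ((measurable_const.mul measurable_snd).mul
        (measurable_const.sub (measurable_const.div measurable_fst)))
  set ν : Measure ℝ := Measure.map U P with hν_def
  set ρ : Measure ℝ := Measure.map V P with hρ_def
  have hρprob : IsProbabilityMeasure ρ := Measure.isProbabilityMeasure_map hVm.aemeasurable
  have hνeq : ν = (volume : Measure ℝ).withDensity (exponentialPDF r1) :=
    exp_law P U hUm hσr hU
  have hmap : Measure.map (fun ω => (U ω, V ω)) P = ν.prod ρ :=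
    (indepFun_iff_map_prod_eq_prod_map_map hUm.aemeasurable hVm.aemeasurable).mp hind
  -- tail of ρ
  have hρtail : ∀ s : ℝ, 0 ≤ s → ρ (Ioi s) = ENNReal.ofReal (Real.exp (-s / σr2sq)) := by
    intro s hs
    rw [hρ_def, Measure.map_apply hVm measurableSet_Ioi]
    exact hV s hs
  have hρneg : ρ (Iic (0:ℝ)) = 0 := by
    have : Iic (0:ℝ) = (Ioi 0)ᶜ := compl_Ioi.symm
    rw [this, measure_compl measurableSet_Ioi (measure_ne_top _ _), measure_univ,
      hρtail 0 le_rfl]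
    simp
  set g : ℝ → ENNReal := fun u => ρ (Prod.mk u ⁻¹' S) with hg_def
  have hgm : Measurable g := measurable_measure_prodMk_left hSm
  -- the event, rewritten
  have hev : {ω | lam * V ω * (1 - θr / U ω) ≤ θr} = ((fun ω => (U ω, V ω)) ⁻¹' S)ᶜ := by
    ext ω
    simp only [Set.mem_setOf_eq, Set.mem_compl_iff, Set.mem_preimage, hS_def, not_lt]
  have hpre : P ((fun ω => (U ω, V ω)) ⁻¹' S) = ∫⁻ u, g u ∂ν := by
    rw [← Measure.map_apply (hUm.prodMk hVm) hSm, hmap, Measure.prod_apply hSm]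
  -- g vanishes on (0, θr]
  have hg0 : ∀ u ∈ Ioc (0:ℝ) θr, g u = 0 := by
    intro u hu
    have hsub : Prod.mk u ⁻¹' S ⊆ Iic (0:ℝ) := by
      intro v hv
      simp only [hS_def, Set.mem_preimage, Set.mem_setOf_eq] at hv
      simp only [Set.mem_Iic]
      by_contra hv0
      push_neg at hv0
      have h1 : 1 ≤ θr / u := (one_le_div hu.1).mpr hu.2
      have h2 : lam * v * (1 - θr / u) ≤ 0 :=
        mul_nonpos_of_nonneg_of_nonpos (by positivity) (by linarith)
      linarith
    exact le_antisymm (le_trans (measure_mono hsub) hρneg.le) (by simp)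
  have hν0 : ν (Iic (0:ℝ)) = 0 := by
    rw [hνeq, withDensity_apply _ measurableSet_Iic,
      ProbabilityTheory.lintegral_exponentialPDF_eq_antiDeriv hr1 0]
    simp
  -- split the integral
  have hsplit : ∫⁻ u, g u ∂ν = ∫⁻ u in Ioi θr, g u ∂ν := by
    rw [← lintegral_add_compl g measurableSet_Iic (μ := ν), Set.compl_Iic]
    have hzero : ∫⁻ u in Iic θr, g u ∂ν = 0 := by
      have h1 : ∀ᵐ u ∂ν, 0 < u := by
        rw [ae_iff]
        have : {u : ℝ | ¬ 0 < u} = Iic 0 := by ext u; simp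
        rw [this]
        exact hν0
      have hae : ∀ᵐ u ∂(ν.restrict (Iic θr)), g u = 0 := by
        filter_upwards [ae_restrict_of_ae h1, ae_restrict_mem measurableSet_Iic] with u hu1 hu2
        exact hg0 u ⟨hu1, hu2⟩
      rw [lintegral_congr_ae hae, lintegral_zero]
    rw [hzero, zero_add]
  -- identify g on (θr, ∞)
  have hgval : ∀ u ∈ Ioi θr, (exponentialPDF r1 * g) u
      = ENNReal.ofReal (r1 * Real.exp (-(r1*u) - c*u/(u-θr))) := by
    intro u hu
    have hu' : θr < u := hu
    have hu0 : 0 < u := hθr.trans hu'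
    have huθ : 0 < u - θr := by linarith
    have hslice : Prod.mk u ⁻¹' S = Ioi (θr*u/(lam*(u-θr))) := by
      ext v
      simp only [hS_def, Set.mem_preimage, Set.mem_setOf_eq, Set.mem_Ioi]
      have key : lam * v * (1 - θr / u) = v * (lam * (u - θr)) / u := by
        field_simp
      rw [key, lt_div_iff₀ hu0, div_lt_iff₀ (by positivity)]
    have hs0 : 0 ≤ θr*u/(lam*(u-θr)) := by positivity
    simp only [Pi.mul_apply, hg_def, hslice, hρtail _ hs0,
      exponentialPDF_of_nonneg hu0.le]
    rw [← ENNReal.ofReal_mul (by positivity)]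
    congr 1
    rw [mul_assoc, ← Real.exp_add]
    congr 1
    rw [Real.exp_eq_exp]
    rw [hc_def]
    field_simp [hlam.ne', hσr2.ne', huθ.ne']
    ring
  have hstep1 : ∫⁻ u in Ioi θr, g u ∂ν
      = ∫⁻ u in Ioi θr, ENNReal.ofReal (r1 * Real.exp (-(r1*u) - c*u/(u-θr))) := by
    have hpdfm : Measurable (exponentialPDF r1) :=
      (measurable_exponentialPDFReal r1).ennreal_ofReal
    rw [hνeq, setLIntegral_withDensity_eq_setLIntegral_mul _ hpdfm hgm measurableSet_Ioi]
    exact setLIntegral_congr_fun measurableSet_Ioi hgval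
  -- shift u = θr + x
  have hshift : ∫⁻ u in Ioi θr, ENNReal.ofReal (r1 * Real.exp (-(r1*u) - c*u/(u-θr)))
      = ∫⁻ x in Ioi (0:ℝ), ENNReal.ofReal ((r1 * Real.exp (-(r1*θr) - c)) *
          Real.exp (-(c*θr/x) - r1*x)) := by
    have him : (fun x : ℝ => θr + x) '' Ioi 0 = Ioi θr := by
      rw [Set.image_const_add_Ioi, add_zero]
    have hd : ∀ x ∈ Ioi (0:ℝ), HasDerivWithinAt (fun x : ℝ => θr + x) 1 (Ioi 0) x :=
      fun x _ => ((hasDerivAt_id x).const_add θr).hasDerivWithinAt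
    rw [← him, my_lintegral_image measurableSet_Ioi hd
      (fun x _ y _ h => by simpa using h)]
    apply setLIntegral_congr_fun measurableSet_Ioi
    intro x hx
    simp only [abs_one, ENNReal.ofReal_one, one_mul]
    congr 1
    rw [mul_assoc, ← Real.exp_add]
    congr 2
    have hx0 : (0:ℝ) < x := hx
    rw [add_sub_cancel_left]
    field_simp
    ring
  -- apply the key integral
  have hstep2 : ∫⁻ x in Ioi (0:ℝ), ENNReal.ofReal ((r1 * Real.exp (-(r1*θr) - c)) *
          Real.exp (-(c*θr/x) - r1*x))
      = ENNReal.ofReal (r1 * Real.exp (-(r1*θr) - c)) *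
          ENNReal.ofReal (2 * Real.sqrt (c*θr/r1) * besselK1 (2 * Real.sqrt (c*θr*r1))) := by
    have : ∀ x : ℝ, ENNReal.ofReal ((r1 * Real.exp (-(r1*θr) - c)) * Real.exp (-(c*θr/x) - r1*x))
        = ENNReal.ofReal (r1 * Real.exp (-(r1*θr) - c))
          * ENNReal.ofReal (Real.exp (-(c*θr/x) - r1*x)) := fun x =>
      ENNReal.ofReal_mul (by positivity)
    simp only [this]
    have hm : Measurable fun x : ℝ => ENNReal.ofReal (Real.exp (-(c*θr/x) - r1*x)) :=
      ((((measurable_const.div measurable_id).neg.sub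
        (measurable_const.mul measurable_id))).exp).ennreal_ofReal
    rw [lintegral_const_mul _ hm, key_integral (by positivity) hr1]
  -- sqrt arithmetic
  have hL : 0 < lam * σrsq * σr2sq := by positivity
  have hsq1 : Real.sqrt (c*θr*r1) = θr / Real.sqrt (lam * σrsq * σr2sq) := by
    have heq : c*θr*r1 = (θr / Real.sqrt (lam * σrsq * σr2sq))^2 := by
      rw [div_pow, Real.sq_sqrt hL.le, hc_def, hr1_def]
      field_simp
    rw [heq, Real.sqrt_sq (by positivity)]
  have hsq2 : r1 * Real.sqrt (c*θr/r1) = θr / Real.sqrt (lam * σrsq * σr2sq) := by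
    have heq : r1 * Real.sqrt (c*θr/r1) = Real.sqrt (r1^2 * (c*θr/r1)) := by
      rw [Real.sqrt_mul (by positivity), Real.sqrt_sq hr1.le]
    rw [heq, show r1^2 * (c*θr/r1) = c*θr*r1 by field_simp, hsq1]
  have hexp : -(r1*θr) - c = -θr / σrsq - θr / (lam * σr2sq) := by
    rw [hr1_def, hc_def]
    field_simp
  have hmu : 2 * Real.sqrt (c*θr*r1) = μe := by
    rw [hsq1, hμe_def]
    ring
  -- assemble the complement probability
  have hXval : P ((fun ω => (U ω, V ω)) ⁻¹' S)
      = ENNReal.ofReal (Real.exp (-θr / σrsq - θr / (lam * σr2sq)) * (μe * besselK1 μe)) := by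
    rw [hpre, hsplit, hstep1, hshift, hstep2, ← ENNReal.ofReal_mul (by positivity)]
    congr 1
    rw [hmu, hexp]
    rw [show r1 * Real.exp (-θr / σrsq - θr / (lam * σr2sq)) *
        (2 * Real.sqrt (c*θr/r1) * besselK1 μe)
      = Real.exp (-θr / σrsq - θr / (lam * σr2sq)) *
        ((2 * (r1 * Real.sqrt (c*θr/r1))) * besselK1 μe) by ring, hsq2]
    rw [hμe_def]
    ring
  -- finish
  have hK1nonneg : 0 ≤ besselK1 μe := by
    apply setIntegral_nonneg measurableSet_Ioi
    intro t _
    positivity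
  rw [hev, measure_compl ((hUm.prodMk hVm) hSm) (measure_ne_top _ _), measure_univ, hXval]
  rw [ENNReal.ofReal_sub _ (by positivity), ENNReal.ofReal_one]
end

section
/- For positive reals a, λ, σ_r², σ_{r,2}², define μ(t) = 2t/√(λσ_r²σ_{r,2}²) and δ(t) = t(1/σ_r² + 1/(λσ_{r,2}²)). Then as t → 0⁺, 1 - μ(t)·exp(-δ(t))·K1(μ(t)) = δ(t) + o(t); i.e., the outage probability of the relayed link is asymptotically t·(1/σ_r² + 1/(λσ_{r,2}²)) as the threshold t tends to 0. -/
open MeasureTheory Real Filter Asymptotics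
open Set

namespace BK1Aux

lemma hasDerivAt_aux (x t : ℝ) :
    HasDerivAt (fun t => -Real.exp (-(x * Real.sinh t)))
      (x * Real.cosh t * Real.exp (-(x * Real.sinh t))) t := by
  have h1 : HasDerivAt (fun t => -(x * Real.sinh t)) (-(x * Real.cosh t)) t :=
    ((Real.hasDerivAt_sinh t).const_mul x).neg
  have h2 := h1.exp.neg
  refine h2.congr_deriv ?_
  ring

lemma tendsto_sinh_atTop : Tendsto Real.sinh atTop atTop :=
  tendsto_atTop_mono' atTop
    (Filter.eventually_atTop.2 ⟨0, fun t ht => (Real.self_le_sinh_iff.2 ht)⟩) tendsto_id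

lemma tendsto_aux (x : ℝ) (hx : 0 < x) :
    Tendsto (fun t => -Real.exp (-(x * Real.sinh t))) atTop (nhds 0) := by
  rw [show (0:ℝ) = -0 by norm_num]
  refine Tendsto.neg ?_
  refine Real.tendsto_exp_atBot.comp ?_
  exact tendsto_neg_atBot_iff.2 (tendsto_sinh_atTop.const_mul_atTop hx)

lemma intOn_deriv (x : ℝ) (hx : 0 < x) :
    IntegrableOn (fun t => x * Real.cosh t * Real.exp (-(x * Real.sinh t))) (Ioi 0) := by
  refine integrableOn_Ioi_deriv_of_nonneg' (fun t _ => hasDerivAt_aux x t) ?_ (tendsto_aux x hx)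
  intro t _
  positivity

lemma int_deriv_eq_one (x : ℝ) (hx : 0 < x) :
    ∫ t in Ioi (0:ℝ), x * Real.cosh t * Real.exp (-(x * Real.sinh t)) = 1 := by
  rw [integral_Ioi_of_hasDerivAt_of_tendsto' (fun t _ => hasDerivAt_aux x t)
    (intOn_deriv x hx) (tendsto_aux x hx)]
  simp


lemma intOn_cosh_exp_sinh (x : ℝ) (hx : 0 < x) :
    IntegrableOn (fun t => Real.cosh t * Real.exp (-(x * Real.sinh t))) (Ioi 0) := by
  have h := (intOn_deriv x hx).const_mul x⁻¹
  have heq : (fun t => x⁻¹ * (x * Real.cosh t * Real.exp (-(x * Real.sinh t))))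
      = fun t => Real.cosh t * Real.exp (-(x * Real.sinh t)) := by
    funext t; field_simp
  rwa [heq] at h

lemma intOn_K1_integrand (x : ℝ) (hx : 0 < x) :
    IntegrableOn (fun t => Real.exp (-x * Real.cosh t) * Real.cosh t) (Ioi 0) := by
  refine (intOn_cosh_exp_sinh x hx).mono' ?_ ?_
  · exact (Continuous.mul (by continuity) Real.continuous_cosh).aestronglyMeasurable
  · filter_upwards [ae_restrict_mem measurableSet_Ioi] with t ht
    have h1 : Real.sinh t ≤ Real.cosh t := (Real.sinh_lt_cosh t).le
    have h2 : Real.exp (-x * Real.cosh t) ≤ Real.exp (-(x * Real.sinh t)) := by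
      apply Real.exp_le_exp.2; nlinarith
    have h3 : (0:ℝ) < Real.cosh t := Real.cosh_pos t
    rw [norm_of_nonneg (by positivity)]
    calc Real.exp (-x * Real.cosh t) * Real.cosh t
        ≤ Real.exp (-(x * Real.sinh t)) * Real.cosh t := by nlinarith [Real.exp_pos (-(x*Real.sinh t))]
      _ = Real.cosh t * Real.exp (-(x * Real.sinh t)) := by ring

lemma intOn_exp_sinh (x : ℝ) (hx : 0 < x) :
    IntegrableOn (fun t => Real.exp (-(x * Real.sinh t))) (Ioi 0) := by
  refine (intOn_cosh_exp_sinh x hx).mono' ?_ ?_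
  · exact (by continuity : Continuous fun t => Real.exp (-(x * Real.sinh t))).aestronglyMeasurable
  · filter_upwards [ae_restrict_mem measurableSet_Ioi] with t ht
    rw [norm_of_nonneg (Real.exp_pos _).le]
    nlinarith [Real.one_le_cosh t, Real.exp_pos (-(x * Real.sinh t))]

lemma sinh_lt_cosh (t : ℝ) : Real.sinh t < Real.cosh t := by
  nlinarith [Real.cosh_sq t, Real.cosh_pos (x := t), Real.sinh_sq t, Real.exp_pos (-t),
    Real.sinh_eq t, Real.cosh_eq t]

lemma key_bound (x : ℝ) (hx : 0 < x) :
    0 ≤ 1 - x * besselK1 x ∧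
    1 - x * besselK1 x ≤ x ^ 2 * ∫ t in Ioi (0:ℝ), Real.exp (-(x * Real.sinh t)) := by
  have hB : IntegrableOn (fun t => x * (Real.exp (-x * Real.cosh t) * Real.cosh t)) (Ioi 0) :=
    (intOn_K1_integrand x hx).const_mul x
  have hxB : x * besselK1 x = ∫ t in Ioi (0:ℝ),
      x * (Real.exp (-x * Real.cosh t) * Real.cosh t) := by
    rw [besselK1, ← integral_const_mul]
  have hsub : 1 - x * besselK1 x = ∫ t in Ioi (0:ℝ),
      (x * Real.cosh t * Real.exp (-(x * Real.sinh t))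
        - x * (Real.exp (-x * Real.cosh t) * Real.cosh t)) := by
    rw [hxB, ← int_deriv_eq_one x hx, ← integral_sub (intOn_deriv x hx) hB]
  -- pointwise facts
  have hpt : ∀ t ∈ Ioi (0:ℝ),
      0 ≤ x * Real.cosh t * Real.exp (-(x * Real.sinh t))
        - x * (Real.exp (-x * Real.cosh t) * Real.cosh t) ∧
      x * Real.cosh t * Real.exp (-(x * Real.sinh t))
        - x * (Real.exp (-x * Real.cosh t) * Real.cosh t)
        ≤ x ^ 2 * Real.exp (-(x * Real.sinh t)) := by
    intro t ht
    have ht0 : (0:ℝ) < t := ht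
    have e1 : Real.cosh t - Real.sinh t = Real.exp (-t) := Real.cosh_sub_sinh t
    have hP : (0:ℝ) < Real.cosh t := Real.cosh_pos t
    have hE : (0:ℝ) < Real.exp (-(x * Real.sinh t)) := Real.exp_pos _
    have hr : (0:ℝ) < Real.exp (-t) := Real.exp_pos _
    have key1 : Real.exp (-x * Real.cosh t)
        = Real.exp (-(x * Real.sinh t)) * Real.exp (-(x * Real.exp (-t))) := by
      rw [← Real.exp_add]
      congr 1
      linear_combination (-x) * e1
    have key2 : 1 - Real.exp (-(x * Real.exp (-t))) ≤ x * Real.exp (-t) := by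
      have := Real.add_one_le_exp (-(x * Real.exp (-t)))
      linarith
    have e3 : Real.cosh t * Real.exp (-t) ≤ 1 := by
      rw [Real.cosh_eq, Real.exp_neg]
      have hu : (1:ℝ) ≤ Real.exp t := Real.one_le_exp ht0.le
      have hu0 : (0:ℝ) < Real.exp t := Real.exp_pos t
      rw [div_mul_eq_mul_div, div_le_one (by positivity)]
      have h2 : (Real.exp t)⁻¹ ≤ 1 := inv_le_one_of_one_le₀ hu
      nlinarith [mul_inv_cancel₀ (ne_of_gt hu0)]
    have hq1 : Real.exp (-(x * Real.exp (-t))) ≤ 1 :=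
      Real.exp_le_one_iff.2 (neg_nonpos.2 (by positivity))
    constructor
    · rw [key1]
      have h5 : Real.exp (-(x * Real.sinh t)) * Real.exp (-(x * Real.exp (-t)))
          ≤ Real.exp (-(x * Real.sinh t)) * 1 :=
        mul_le_mul_of_nonneg_left hq1 hE.le
      nlinarith [mul_le_mul_of_nonneg_left h5 (mul_pos hx hP).le]
    · rw [key1]
      calc x * Real.cosh t * Real.exp (-(x * Real.sinh t))
            - x * ((Real.exp (-(x * Real.sinh t)) * Real.exp (-(x * Real.exp (-t)))) * Real.cosh t)
          = (x * Real.cosh t * Real.exp (-(x * Real.sinh t)))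
              * (1 - Real.exp (-(x * Real.exp (-t)))) := by ring
        _ ≤ (x * Real.cosh t * Real.exp (-(x * Real.sinh t))) * (x * Real.exp (-t)) := by
            apply mul_le_mul_of_nonneg_left key2 (by positivity)
        _ = (x ^ 2 * Real.exp (-(x * Real.sinh t))) * (Real.cosh t * Real.exp (-t)) := by ring
        _ ≤ (x ^ 2 * Real.exp (-(x * Real.sinh t))) * 1 := by
            apply mul_le_mul_of_nonneg_left e3 (by positivity)
        _ = x ^ 2 * Real.exp (-(x * Real.sinh t)) := mul_one _
  constructor
  · rw [hsub]
    exact setIntegral_nonneg measurableSet_Ioi (fun t ht => (hpt t ht).1)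
  · rw [hsub, ← integral_const_mul]
    exact setIntegral_mono_on ((intOn_deriv x hx).sub hB)
      ((intOn_exp_sinh x hx).const_mul _) measurableSet_Ioi (fun t ht => (hpt t ht).2)


lemma int_exp_shift (c T : ℝ) (hc : 0 < c) :
    ∫ t in Ioi T, Real.exp (-(c * (t - T))) = 1 / c := by
  have hint : IntegrableOn (fun t => Real.exp (-(c * (t - T)))) (Ioi T) := by
    have h := (exp_neg_integrableOn_Ioi T hc).const_mul (Real.exp (c * T))
    have heq : (fun t => Real.exp (c * T) * Real.exp (-c * t))
        = fun t => Real.exp (-(c * (t - T))) := by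
      funext t; rw [← Real.exp_add]; ring_nf
    rwa [heq] at h
  have hderiv : ∀ t ∈ Ici T, HasDerivAt (fun t => -(1 / c) * Real.exp (-(c * (t - T))))
      (Real.exp (-(c * (t - T)))) t := by
    intro t _
    have h1 : HasDerivAt (fun t : ℝ => -(c * (t - T))) (-c) t := by
      simpa using (((hasDerivAt_id t).sub_const T).const_mul c).fun_neg
    have h2 := (h1.exp).const_mul (-(1 / c))
    refine h2.congr_deriv ?_
    field_simp
  have htop : Tendsto (fun t => -(1 / c) * Real.exp (-(c * (t - T)))) atTop (nhds 0) := by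
    rw [show (0:ℝ) = -(1/c) * 0 by ring]
    refine Tendsto.const_mul _ ?_
    refine Real.tendsto_exp_atBot.comp ?_
    refine tendsto_neg_atBot_iff.2 ?_
    exact (tendsto_atTop_add_const_right atTop (-T) tendsto_id).const_mul_atTop hc
  rw [integral_Ioi_of_hasDerivAt_of_tendsto' hderiv hint htop]
  simp

lemma tendsto_mul_int :
    Tendsto (fun x => x * ∫ t in Ioi (0:ℝ), Real.exp (-(x * Real.sinh t)))
      (nhdsWithin 0 (Ioi 0)) (nhds 0) := by
  rw [NormedAddCommGroup.tendsto_nhds_zero]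
  intro ε hε
  set T : ℝ := Real.arsinh (2 / ε + 1) with hT
  have hsT : Real.sinh T = 2 / ε + 1 := Real.sinh_arsinh _
  have hsTpos : (0:ℝ) < Real.sinh T := by rw [hsT]; positivity
  have hTpos : (0:ℝ) < T := Real.sinh_pos_iff.1 hsTpos
  have hsTbig : 2 / ε < Real.sinh T := by rw [hsT]; linarith
  filter_upwards [Ioo_mem_nhdsGT_of_mem (Set.left_mem_Ico.2 (by positivity :
      (0:ℝ) < ε / (2 * T)))] with x hx
  obtain ⟨hx0, hxlt⟩ := hx
  set H := ∫ t in Ioi (0:ℝ), Real.exp (-(x * Real.sinh t)) with hH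
  have hint := intOn_exp_sinh x hx0
  have h1 : IntegrableOn (fun t => Real.exp (-(x * Real.sinh t))) (Ioc 0 T) :=
    hint.mono_set Ioc_subset_Ioi_self
  have h2 : IntegrableOn (fun t => Real.exp (-(x * Real.sinh t))) (Ioi T) :=
    hint.mono_set (Ioi_subset_Ioi hTpos.le)
  have hsplit : H = (∫ t in Ioc (0:ℝ) T, Real.exp (-(x * Real.sinh t)))
      + ∫ t in Ioi T, Real.exp (-(x * Real.sinh t)) := by
    rw [hH, ← Set.Ioc_union_Ioi_eq_Ioi hTpos.le,
      setIntegral_union (Set.Ioc_disjoint_Ioi le_rfl) measurableSet_Ioi h1 h2]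
  have hterm1 : (∫ t in Ioc (0:ℝ) T, Real.exp (-(x * Real.sinh t))) ≤ T := by
    have : (∫ t in Ioc (0:ℝ) T, Real.exp (-(x * Real.sinh t)))
        ≤ ∫ _ in Ioc (0:ℝ) T, (1:ℝ) := by
      refine setIntegral_mono_on h1 (integrableOn_const measure_Ioc_lt_top.ne)
        measurableSet_Ioc ?_
      intro t ht
      refine Real.exp_le_one_iff.2 (neg_nonpos.2 ?_)
      have := Real.sinh_pos_iff.2 ht.1
      positivity
    simpa [Real.volume_Ioc, ENNReal.toReal_ofReal hTpos.le, hTpos.le] using this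
  have hterm2 : (∫ t in Ioi T, Real.exp (-(x * Real.sinh t))) ≤ 1 / (x * Real.sinh T) := by
    rw [← int_exp_shift (x * Real.sinh T) T (by positivity)]
    refine setIntegral_mono_on h2 ?_ measurableSet_Ioi ?_
    · have h := (exp_neg_integrableOn_Ioi T (by positivity : 0 < x * Real.sinh T)).const_mul
        (Real.exp (x * Real.sinh T * T))
      have heq : (fun t => Real.exp (x * Real.sinh T * T) * Real.exp (-(x * Real.sinh T) * t))
          = fun t => Real.exp (-(x * Real.sinh T * (t - T))) := by
        funext t; rw [← Real.exp_add]; ring_nf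
      rwa [heq] at h
    · intro t ht
      have htT : T < t := ht
      refine Real.exp_le_exp.2 ?_
      rw [neg_le_neg_iff]
      -- x * sinh T * (t - T) ≤ x * sinh t
      have hst : Real.sinh T * (t - T) ≤ Real.sinh t := by
        have hadd : Real.sinh t = Real.sinh T * Real.cosh (t - T)
            + Real.cosh T * Real.sinh (t - T) := by
          rw [← Real.sinh_add]; ring_nf
        have hu : (0:ℝ) ≤ t - T := by linarith
        have h1' : t - T ≤ Real.sinh (t - T) := Real.self_le_sinh_iff.2 hu
        have h2' : Real.sinh T ≤ Real.cosh T := (sinh_lt_cosh T).le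
        have h3' : (1:ℝ) ≤ Real.cosh (t - T) := Real.one_le_cosh _
        nlinarith [Real.sinh_pos_iff.2 hTpos, Real.cosh_pos T]
      nlinarith
  have hHnonneg : 0 ≤ H :=
    setIntegral_nonneg measurableSet_Ioi (fun t _ => (Real.exp_pos _).le)
  rw [norm_of_nonneg (by positivity)]
  have : x * H ≤ x * T + 1 / Real.sinh T := by
    have hxH : x * H = x * (∫ t in Ioc (0:ℝ) T, Real.exp (-(x * Real.sinh t)))
        + x * ∫ t in Ioi T, Real.exp (-(x * Real.sinh t)) := by rw [hsplit]; ring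
    have b2 : x * (∫ t in Ioi T, Real.exp (-(x * Real.sinh t))) ≤ 1 / Real.sinh T := by
      calc x * (∫ t in Ioi T, Real.exp (-(x * Real.sinh t)))
          ≤ x * (1 / (x * Real.sinh T)) := mul_le_mul_of_nonneg_left hterm2 hx0.le
        _ = 1 / Real.sinh T := by field_simp
    have b1 : x * (∫ t in Ioc (0:ℝ) T, Real.exp (-(x * Real.sinh t))) ≤ x * T :=
      mul_le_mul_of_nonneg_left hterm1 hx0.le
    linarith
  have hb1 : x * T < ε / 2 := by
    have h := mul_lt_mul_of_pos_right hxlt hTpos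
    have heq : ε / (2 * T) * T = ε / 2 := by field_simp
    linarith [heq ▸ h]
  have hb2 : 1 / Real.sinh T < ε / 2 := by
    rw [div_lt_div_iff₀ hsTpos (by norm_num : (0:ℝ) < 2)]
    have := (div_lt_iff₀ hε).1 hsTbig
    linarith
  linarith

end BK1Aux

/-- With `μ(t) = 2t/√(λσr²σr2²)` and `δ(t) = t(1/σr² + 1/(λσr2²))`, as `t → 0⁺`,
`1 - μ(t) exp(-δ(t)) K₁(μ(t)) = δ(t) + o(t)`. -/
theorem stmt_8 (σrsq σr2sq lam : ℝ) (hσr : 0 < σrsq) (hσr2 : 0 < σr2sq) (hlam : 0 < lam) :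
    (fun t : ℝ =>
        (1 - (2 * t / Real.sqrt (lam * σrsq * σr2sq)) *
            Real.exp (-(t * (1 / σrsq + 1 / (lam * σr2sq)))) *
            besselK1 (2 * t / Real.sqrt (lam * σrsq * σr2sq)))
          - t * (1 / σrsq + 1 / (lam * σr2sq)))
      =o[nhdsWithin 0 (Set.Ioi 0)] (fun t : ℝ => t) := by
  set s : ℝ := Real.sqrt (lam * σrsq * σr2sq) with hs
  have hspos : 0 < s := Real.sqrt_pos.2 (by positivity)
  set d : ℝ := 1 / σrsq + 1 / (lam * σr2sq) with hd
  have hdpos : 0 < d := by positivity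
  have hdecomp : (fun t : ℝ =>
        (1 - (2 * t / s) * Real.exp (-(t * d)) * besselK1 (2 * t / s)) - t * d)
      = fun t : ℝ => (((1 - Real.exp (-(t * d))) - t * d)
          + Real.exp (-(t * d)) * (1 - (2 * t / s) * besselK1 (2 * t / s))) := by
    funext t; ring
  rw [hdecomp]
  have oA : (fun t : ℝ => (1 - Real.exp (-(t * d))) - t * d)
      =o[nhdsWithin 0 (Set.Ioi 0)] (fun t : ℝ => t) := by
    have hA : HasDerivAt (fun t : ℝ => 1 - Real.exp (-(t * d))) d 0 := by
      have h1 : HasDerivAt (fun t : ℝ => -(t * d)) (-d) 0 := by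
        simpa using ((hasDerivAt_id (0:ℝ)).mul_const d).fun_neg
      have h2 := (h1.exp).const_sub 1
      refine h2.congr_deriv ?_
      simp
    have := (hasDerivAt_iff_isLittleO.1 hA)
    simp only [sub_zero, zero_mul, neg_zero, Real.exp_zero, sub_self, smul_eq_mul] at this
    refine IsLittleO.mono ?_ nhdsWithin_le_nhds
    refine this.congr' ?_ (Eventually.of_forall fun t => rfl)
    filter_upwards with t
    ring
  have oB : (fun t : ℝ => Real.exp (-(t * d)) * (1 - (2 * t / s) * besselK1 (2 * t / s)))
      =o[nhdsWithin 0 (Set.Ioi 0)] (fun t : ℝ => t) := by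
    rw [isLittleO_iff]
    intro ε hε
    -- the composed limit
    have hmap : Tendsto (fun t : ℝ => 2 * t / s) (nhdsWithin 0 (Set.Ioi 0))
        (nhdsWithin 0 (Set.Ioi 0)) := by
      apply tendsto_nhdsWithin_of_tendsto_nhds_of_eventually_within
      · have : Tendsto (fun t : ℝ => 2 * t / s) (nhds 0) (nhds (2 * 0 / s)) :=
          (Continuous.tendsto (by continuity) 0)
        simpa using this.mono_left nhdsWithin_le_nhds
      · filter_upwards [self_mem_nhdsWithin] with t (ht : 0 < t)
        exact div_pos (by linarith) hspos
    have hcomp := (BK1Aux.tendsto_mul_int.comp hmap).const_mul (2 / s)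
    rw [mul_zero] at hcomp
    have hev := (NormedAddCommGroup.tendsto_nhds_zero.1 hcomp) ε hε
    filter_upwards [hev, self_mem_nhdsWithin] with t hevt (ht : 0 < t)
    set x := 2 * t / s with hx
    have hxpos : 0 < x := div_pos (by linarith) hspos
    obtain ⟨hk1, hk2⟩ := BK1Aux.key_bound x hxpos
    have hexp1 : Real.exp (-(t * d)) ≤ 1 :=
      Real.exp_le_one_iff.2 (neg_nonpos.2 (by positivity))
    have hHnn : 0 ≤ ∫ u in Set.Ioi (0:ℝ), Real.exp (-(x * Real.sinh u)) :=
      setIntegral_nonneg measurableSet_Ioi (fun u _ => (Real.exp_pos _).le)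
    rw [norm_of_nonneg (mul_nonneg (Real.exp_pos _).le hk1),
      norm_of_nonneg ht.le]
    have step1 : Real.exp (-(t * d)) * (1 - x * besselK1 x) ≤ 1 - x * besselK1 x := by
      nlinarith
    have step2 : x ^ 2 * (∫ u in Set.Ioi (0:ℝ), Real.exp (-(x * Real.sinh u)))
        = t * (2 / s * (x * ∫ u in Set.Ioi (0:ℝ), Real.exp (-(x * Real.sinh u)))) := by
      rw [hx]; field_simp
    have step3 : 2 / s * (x * ∫ u in Set.Ioi (0:ℝ), Real.exp (-(x * Real.sinh u))) ≤ ε := by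
      have h0 : (0:ℝ) ≤ 2 / s * (x * ∫ u in Set.Ioi (0:ℝ), Real.exp (-(x * Real.sinh u))) :=
        mul_nonneg (div_nonneg (by norm_num) hspos.le) (mul_nonneg hxpos.le hHnn)
      have := hevt
      rw [Real.norm_eq_abs] at this
      calc 2 / s * (x * ∫ u in Set.Ioi (0:ℝ), Real.exp (-(x * Real.sinh u)))
          ≤ |2 / s * (x * ∫ u in Set.Ioi (0:ℝ), Real.exp (-(x * Real.sinh u)))| := le_abs_self _
        _ ≤ ε := by simpa [hx, Function.comp] using this.le
    calc Real.exp (-(t * d)) * (1 - x * besselK1 x)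
        ≤ 1 - x * besselK1 x := step1
      _ ≤ x ^ 2 * ∫ u in Set.Ioi (0:ℝ), Real.exp (-(x * Real.sinh u)) := hk2
      _ = t * (2 / s * (x * ∫ u in Set.Ioi (0:ℝ), Real.exp (-(x * Real.sinh u)))) := step2
      _ ≤ t * ε := mul_le_mul_of_nonneg_left step3 ht.le
      _ = ε * t := mul_comm _ _
  exact oA.add oB
end
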